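/- arXiv:2012.07245 — 2 statements merged into one kernel-verified Lean document; each statement's English description precedes it below -/
import Mathlib

section
/- For a real random variable Y with E|Y| < ∞ and α ∈ (0,1), every α-quantile of Y minimizes y' ↦ E[ℓ_α(Y, y')] over y' ∈ R, where ℓ_α(y, y') = max{(α−1)(y−y'), α(y−y')} is the pinball loss. -/
open MeasureTheory

theorem stmt12 {Ω : Type*} [MeasurableSpace Ω] (μ : Measure Ω)
    [IsProbabilityMeasure μ]
    (Y : Ω → ℝ) (hY : Integrable Y μ)
    (α : ℝ) (hα : α ∈ Set.Ioo (0 : ℝ) 1)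
    (q : ℝ)
    (hq1 : ENNReal.ofReal α ≤ μ {ω | Y ω ≤ q})
    (hq2 : ENNReal.ofReal (1 - α) ≤ μ {ω | q ≤ Y ω}) :
    ∀ y' : ℝ,
      ∫ ω, max ((α - 1) * (Y ω - q)) (α * (Y ω - q)) ∂μ ≤
      ∫ ω, max ((α - 1) * (Y ω - y')) (α * (Y ω - y')) ∂μ := by
  intro y'
  obtain ⟨hα0, hα1⟩ := hα
  have hYm := hY.1
  set Z : Ω → ℝ := hYm.mk Y with hZ
  have hZsm : StronglyMeasurable Z := hYm.stronglyMeasurable_mk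
  have hZm : Measurable Z := hZsm.measurable
  have hYZ : Y =ᵐ[μ] Z := hYm.ae_eq_mk
  have hZint : Integrable Z μ := hY.congr hYZ
  -- transfer quantile hypotheses to Z
  have hq1' : ENNReal.ofReal α ≤ μ {ω | Z ω ≤ q} := by
    have : μ {ω | Y ω ≤ q} = μ {ω | Z ω ≤ q} := by
      apply measure_congr
      filter_upwards [hYZ] with ω h
      change (Y ω ≤ q) = (Z ω ≤ q)
      rw [h]
    rwa [this] at hq1
  have hq2' : ENNReal.ofReal (1 - α) ≤ μ {ω | q ≤ Z ω} := by
    have : μ {ω | q ≤ Y ω} = μ {ω | q ≤ Z ω} := by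
      apply measure_congr
      filter_upwards [hYZ] with ω h
      change (q ≤ Y ω) = (q ≤ Z ω)
      rw [h]
    rwa [this] at hq2
  have hposint : ∀ t : ℝ, Integrable (fun ω => max (t - Z ω) 0) μ := fun t =>
    ((integrable_const t).sub hZint).pos_part
  have hlinint : ∀ t : ℝ, Integrable (fun ω => α * (Z ω - t)) μ := fun t =>
    (hZint.sub (integrable_const t)).const_mul α
  -- rewrite the pinball integral
  have hmeq : ∀ t : ℝ, ∫ ω, max ((α - 1) * (Y ω - t)) (α * (Y ω - t)) ∂μ
      = α * ((∫ ω, Z ω ∂μ) - t) + ∫ ω, max (t - Z ω) 0 ∂μ := by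
    intro t
    have h1 : (fun ω => max ((α - 1) * (Y ω - t)) (α * (Y ω - t)))
        =ᵐ[μ] fun ω => α * (Z ω - t) + max (t - Z ω) 0 := by
      filter_upwards [hYZ] with ω h
      rw [h]
      rcases le_total (Z ω) t with hle | hle
      · rw [max_eq_left (by nlinarith), max_eq_left (by linarith)]; ring
      · rw [max_eq_right (by nlinarith), max_eq_right (by linarith)]; ring
    rw [integral_congr_ae h1, integral_add (hlinint t) (hposint t)]
    congr 1
    rw [integral_const_mul, integral_sub hZint (integrable_const t)]
    simp
  rw [hmeq q, hmeq y']
  set I := ∫ ω, Z ω ∂μ with hI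
  have key : (∫ ω, max (q - Z ω) 0 ∂μ) + α * (y' - q) ≤ ∫ ω, max (y' - Z ω) 0 ∂μ := by
    rcases le_total q y' with hqy | hqy
    · -- case q ≤ y'
      set s : Set Ω := {ω | Z ω ≤ q} with hs_def
      have hs : MeasurableSet s := measurableSet_le hZm measurable_const
      have hmα : α ≤ (μ s).toReal := by
        have := ENNReal.toReal_mono (measure_ne_top μ s) hq1'
        rwa [ENNReal.toReal_ofReal hα0.le] at this
      have hpt : ∀ ω, max (q - Z ω) 0 + s.indicator (fun _ => y' - q) ω
          ≤ max (y' - Z ω) 0 := by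
        intro ω
        by_cases hω : ω ∈ s
        · have hZq : Z ω ≤ q := hω
          rw [Set.indicator_of_mem hω, max_eq_left (by linarith),
            max_eq_left (by linarith)]
          ring_nf
          linarith
        · rw [Set.indicator_of_notMem hω, add_zero]
          exact max_le_max (by linarith) le_rfl
      have hind : Integrable (s.indicator fun _ : Ω => y' - q) μ :=
        (integrable_const (y' - q)).indicator hs
      have hint1 : Integrable (fun ω => max (q - Z ω) 0 + s.indicator (fun _ => y' - q) ω) μ :=
        (hposint q).add hind
      have hle := integral_mono hint1 (hposint y') hpt
      rw [integral_add (hposint q) hind, integral_indicator_const _ hs, measureReal_def] at hle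
      have h2 : α * (y' - q) ≤ (μ s).toReal • (y' - q) := by
        rw [smul_eq_mul]
        nlinarith
      linarith
    · -- case y' ≤ q
      set s : Set Ω := {ω | Z ω < q} with hs_def
      have hs : MeasurableSet s := measurableSet_lt hZm measurable_const
      have hmα : (μ s).toReal ≤ α := by
        have hcompl : s = {ω | q ≤ Z ω}ᶜ := by
          ext ω; simp [hs_def, not_le]
        have h1 : μ s ≤ ENNReal.ofReal α := by
          rw [hcompl, measure_compl (measurableSet_le measurable_const hZm)
            (measure_ne_top _ _), measure_univ]
          calc 1 - μ {ω | q ≤ Z ω} ≤ 1 - ENNReal.ofReal (1 - α) :=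
                tsub_le_tsub_left hq2' 1
            _ = ENNReal.ofReal α := by
                rw [show (1 : ENNReal) = ENNReal.ofReal 1 by simp,
                  ← ENNReal.ofReal_sub 1 (by linarith)]
                norm_num
        exact ENNReal.toReal_le_of_le_ofReal hα0.le h1
      have hpt : ∀ ω, max (q - Z ω) 0 + s.indicator (fun _ => y' - q) ω
          ≤ max (y' - Z ω) 0 := by
        intro ω
        by_cases hω : ω ∈ s
        · have hZq : Z ω < q := hω
          rw [Set.indicator_of_mem hω, max_eq_left (by linarith)]
          have h3 : q - Z ω + (y' - q) = y' - Z ω := by ring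
          rw [h3]
          exact le_max_left _ _
        · have hZq : q ≤ Z ω := not_lt.mp hω
          rw [Set.indicator_of_notMem hω, add_zero, max_eq_right (by linarith)]
          exact le_max_right _ _
      have hind : Integrable (s.indicator fun _ : Ω => y' - q) μ :=
        (integrable_const (y' - q)).indicator hs
      have hint1 : Integrable (fun ω => max (q - Z ω) 0 + s.indicator (fun _ => y' - q) ω) μ :=
        (hposint q).add hind
      have hle := integral_mono hint1 (hposint y') hpt
      rw [integral_add (hposint q) hind, integral_indicator_const _ hs, measureReal_def] at hle
      have h2 : α * (y' - q) ≤ (μ s).toReal • (y' - q) := by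
        rw [smul_eq_mul]
        nlinarith
      linarith
  nlinarith [key]
end

section
/- Let λ₁ ≥ ... ≥ λ_C > 0 be the nonzero eigenvalues of BBᵀ (B an S×C matrix of full column rank), let Q = diag(σ₁²,...,σ_S²), Σ = BBᵀ + Q, and let δ = max_j |σ_j² − s̄| with s̄ the average of the σ_j². If λ_C > 2δ, then the C-th largest eigenvalue μ_C of Σ is strictly greater than the (C+1)-st largest eigenvalue μ_{C+1}: indeed μ_C ≥ λ_C + s̄ − δ > s̄ + δ ≥ μ_{C+1}. -/
open Matrix Polynomial

section Helpers

lemma charpoly_diag' {n : ℕ} (d : Fin n → ℝ) :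
    (Matrix.diagonal d).charpoly = ∏ i, (X - C (d i)) := by
  have : charmatrix (Matrix.diagonal d) = Matrix.diagonal (fun i => X - C (d i)) := by
    ext i j
    by_cases h : i = j
    · subst h; simp
    · simp [charmatrix_apply_ne _ _ _ h, Matrix.diagonal_apply_ne _ h]
  rw [Matrix.charpoly, this, Matrix.det_diagonal]

lemma charpoly_conj' {n : ℕ} (U : Matrix.unitaryGroup (Fin n) ℝ) (D : Matrix (Fin n) (Fin n) ℝ) :
    ((U : Matrix (Fin n) (Fin n) ℝ) * D * star (U : Matrix (Fin n) (Fin n) ℝ)).charpoly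
      = D.charpoly := by
  have hU : (U : Matrix (Fin n) (Fin n) ℝ) * star (U : Matrix (Fin n) (Fin n) ℝ) = 1 :=
    Matrix.mem_unitaryGroup_iff.mp U.2
  set Up := (C : ℝ →+* ℝ[X]).mapMatrix (U : Matrix (Fin n) (Fin n) ℝ)
  set Vp := (C : ℝ →+* ℝ[X]).mapMatrix (star (U : Matrix (Fin n) (Fin n) ℝ))
  have hUVp : Up * Vp = 1 := by
    rw [← RingHom.map_mul, hU]; simp [Up, Vp]
  have key : charmatrix ((U : Matrix (Fin n) (Fin n) ℝ) * D * star (U : Matrix (Fin n) (Fin n) ℝ))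
      = Up * charmatrix D * Vp := by
    unfold charmatrix
    rw [RingHom.map_mul, RingHom.map_mul, Matrix.mul_sub, Matrix.sub_mul]
    congr 1
    have := (Matrix.scalar_commute (n := Fin n) (X : ℝ[X]) (fun r' => Commute.all _ _) Vp).eq
    rw [Matrix.mul_assoc, this, ← Matrix.mul_assoc, hUVp, Matrix.one_mul]
  rw [Matrix.charpoly, Matrix.charpoly, key, Matrix.det_mul, Matrix.det_mul]
  have h1 : Up.det * Vp.det = 1 := by rw [← Matrix.det_mul, hUVp, Matrix.det_one]
  calc Up.det * (charmatrix D).det * Vp.det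
      = Up.det * Vp.det * (charmatrix D).det := by ring
    _ = (charmatrix D).det := by rw [h1, one_mul]

lemma charpoly_hermitian' {n : ℕ} {M : Matrix (Fin n) (Fin n) ℝ} (hM : M.IsHermitian) :
    M.charpoly = ∏ i, (X - C (hM.eigenvalues i)) := by
  conv_lhs => rw [hM.spectral_theorem]
  rw [Unitary.conjStarAlgAut_apply, charpoly_conj', charpoly_diag']
  simp

lemma prod_roots' {n : ℕ} (f : Fin n → ℝ) :
    (∏ i, (X - C (f i))).roots = Multiset.map f Finset.univ.val := by
  have : ∏ i, (X - C (f i)) = ((Finset.univ.val.map f).map fun a => X - C a).prod := by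
    rw [Multiset.map_map]; rfl
  rw [this, roots_multiset_prod_X_sub_C]

lemma count_filter_eq' {n : ℕ} (f : Fin n → ℝ) (p : ℝ → Prop) [DecidablePred p] :
    (Finset.univ.filter fun i => p (f i)).card
      = Multiset.countP p (Multiset.map f Finset.univ.val) := by
  rw [Multiset.countP_map]
  rfl

lemma countP_replicate' {α : Type*} (p : α → Prop) [DecidablePred p] (k : ℕ) (a : α) :
    Multiset.countP p (Multiset.replicate k a) = if p a then k else 0 := by
  induction k with
  | zero => simp
  | succ k ih =>
    rw [Multiset.replicate_succ, Multiset.countP_cons, ih]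
    by_cases h : p a <;> simp [h]

variable {n : ℕ} {M : Matrix (Fin n) (Fin n) ℝ} (hM : M.IsHermitian)

lemma eb_dot (i j : Fin n) :
    ⇑(hM.eigenvectorBasis i) ⬝ᵥ ⇑(hM.eigenvectorBasis j) = if i = j then (1:ℝ) else 0 := by
  have h := (orthonormal_iff_ite.mp hM.eigenvectorBasis.orthonormal) i j
  rw [PiLp.inner_apply] at h
  simpa [dotProduct, mul_comm] using h

lemma eb_expand (x : Fin n → ℝ) :
    x = ∑ j, (⇑(hM.eigenvectorBasis j) ⬝ᵥ x) • ⇑(hM.eigenvectorBasis j) := by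
  have h := hM.eigenvectorBasis.sum_repr (WithLp.equiv 2 _ |>.symm x)
  have h2 : ∀ j, hM.eigenvectorBasis.repr ((WithLp.equiv 2 _).symm x) j
      = ⇑(hM.eigenvectorBasis j) ⬝ᵥ x := by
    intro j
    rw [hM.eigenvectorBasis.repr_apply_apply, PiLp.inner_apply]
    simp [dotProduct, mul_comm]
  calc x = ⇑((WithLp.equiv 2 (Fin n → ℝ)).symm x) := rfl
    _ = _ := by
        rw [← h]
        simp only [h2]
        rw [WithLp.ofLp_sum]; rfl

lemma expand_dot (c d : Fin n → ℝ) :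
    (∑ i, c i • ⇑(hM.eigenvectorBasis i)) ⬝ᵥ (∑ j, d j • ⇑(hM.eigenvectorBasis j))
      = ∑ i, c i * d i := by
  set b := fun i => ⇑(hM.eigenvectorBasis i) with hb
  simp only [dotProduct, Finset.sum_apply, Pi.smul_apply, smul_eq_mul]
  have step : ∀ k, (∑ i, c i * b i k) * (∑ j, d j * b j k)
      = ∑ i, ∑ j, (c i * d j) * (b i k * b j k) := by
    intro k
    rw [Finset.sum_mul_sum]
    apply Finset.sum_congr rfl; intro i _
    apply Finset.sum_congr rfl; intro j _
    ring
  change ∑ k, (∑ i, c i * b i k) * (∑ j, d j * b j k) = _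
  simp only [step]
  rw [Finset.sum_comm]
  apply Finset.sum_congr rfl; intro i _
  rw [Finset.sum_comm]
  have inner : ∀ j, ∑ k, (c i * d j) * (b i k * b j k)
      = (c i * d j) * (if i = j then 1 else 0) := by
    intro j
    rw [← Finset.mul_sum]
    congr 1
    exact eb_dot hM i j
  simp only [inner]
  simp [Finset.sum_ite_eq]

lemma dot_self_eq (x : Fin n → ℝ) :
    x ⬝ᵥ x = ∑ j, (⇑(hM.eigenvectorBasis j) ⬝ᵥ x)^2 := by
  conv_lhs => rw [eb_expand hM x]
  rw [expand_dot hM]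
  apply Finset.sum_congr rfl; intro j _; ring

lemma dot_mulVec_eq (x : Fin n → ℝ) :
    x ⬝ᵥ (M *ᵥ x) = ∑ j, hM.eigenvalues j * (⇑(hM.eigenvectorBasis j) ⬝ᵥ x)^2 := by
  set d := fun j => ⇑(hM.eigenvectorBasis j) ⬝ᵥ x with hd
  have hMx : M *ᵥ x = ∑ j, (hM.eigenvalues j * d j) • ⇑(hM.eigenvectorBasis j) := by
    conv_lhs => rw [eb_expand hM x]
    rw [show M *ᵥ (∑ j, d j • ⇑(hM.eigenvectorBasis j))
        = ∑ j, M *ᵥ (d j • ⇑(hM.eigenvectorBasis j)) from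
      map_sum (Matrix.mulVecLin M) _ _]
    apply Finset.sum_congr rfl; intro j _
    rw [Matrix.mulVec_smul, hM.mulVec_eigenvectorBasis, smul_smul, mul_comm]
  rw [hMx]
  conv_lhs => rw [eb_expand hM x]
  rw [expand_dot hM]
  apply Finset.sum_congr rfl; intro j _; ring

/-- linear map given by dot products against a family of vectors -/
def dotMap {n : ℕ} {ι : Type*} (g : ι → (Fin n → ℝ)) : (Fin n → ℝ) →ₗ[ℝ] (ι → ℝ) where
  toFun x := fun j => g j ⬝ᵥ x
  map_add' x y := by funext j; simp [dotProduct_add]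
  map_smul' c x := by funext j; simp [dotProduct_smul]

lemma exists_ker {n : ℕ} {W : Type*} [AddCommGroup W] [Module ℝ W] [FiniteDimensional ℝ W]
    (φ : (Fin n → ℝ) →ₗ[ℝ] W) (h : Module.finrank ℝ W < n) :
    ∃ x : Fin n → ℝ, x ≠ 0 ∧ φ x = 0 := by
  by_contra hc
  push_neg at hc
  have hinj : Function.Injective φ := by
    rw [← LinearMap.ker_eq_bot]
    by_contra hk
    obtain ⟨x, hx, hx0⟩ := Submodule.exists_mem_ne_zero_of_ne_bot hk
    exact hc x hx0 (LinearMap.mem_ker.mp hx)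
  have h2 := LinearMap.finrank_le_finrank_of_injective hinj
  rw [Module.finrank_fintype_fun_eq_card, Fintype.card_fin] at h2
  omega

lemma sum_sq_lt {n : ℕ} (ev d : Fin n → ℝ) (T : Finset (Fin n)) (t : ℝ)
    (h1 : ∀ j ∈ T, ev j < t) (h0 : ∀ j ∉ T, d j = 0)
    (hpos : 0 < ∑ j, (d j)^2) :
    ∑ j, ev j * (d j)^2 < t * ∑ j, (d j)^2 := by
  have hex : ∃ j, d j ≠ 0 := by
    by_contra hall
    push_neg at hall
    simp [hall] at hpos
  obtain ⟨j0, hj0⟩ := hex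
  have hj0T : j0 ∈ T := by
    by_contra h
    exact hj0 (h0 j0 h)
  rw [Finset.mul_sum]
  apply Finset.sum_lt_sum
  · intro j _
    by_cases hj : j ∈ T
    · exact mul_le_mul_of_nonneg_right (le_of_lt (h1 j hj)) (sq_nonneg _)
    · simp [h0 j hj]
  · exact ⟨j0, Finset.mem_univ _,
      (mul_lt_mul_of_pos_right (h1 j0 hj0T) (by positivity))⟩

lemma sum_sq_le {n : ℕ} (ev d : Fin n → ℝ) (T : Finset (Fin n)) (a : ℝ)
    (h1 : ∀ j ∈ T, a ≤ ev j) (h0 : ∀ j ∉ T, d j = 0) :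
    a * ∑ j, (d j)^2 ≤ ∑ j, ev j * (d j)^2 := by
  rw [Finset.mul_sum]
  apply Finset.sum_le_sum
  intro j _
  by_cases hj : j ∈ T
  · exact mul_le_mul_of_nonneg_right (h1 j hj) (sq_nonneg _)
  · simp [h0 j hj]

lemma sum_sq_gt {n : ℕ} (ev d : Fin n → ℝ) (T : Finset (Fin n)) (t : ℝ)
    (h1 : ∀ j ∈ T, t < ev j) (h0 : ∀ j ∉ T, d j = 0)
    (hpos : 0 < ∑ j, (d j)^2) :
    t * ∑ j, (d j)^2 < ∑ j, ev j * (d j)^2 := by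
  have hex : ∃ j, d j ≠ 0 := by
    by_contra hall
    push_neg at hall
    simp [hall] at hpos
  obtain ⟨j0, hj0⟩ := hex
  have hj0T : j0 ∈ T := by
    by_contra h
    exact hj0 (h0 j0 h)
  rw [Finset.mul_sum]
  apply Finset.sum_lt_sum
  · intro j _
    by_cases hj : j ∈ T
    · exact mul_le_mul_of_nonneg_right (le_of_lt (h1 j hj)) (sq_nonneg _)
    · simp [h0 j hj]
  · exact ⟨j0, Finset.mem_univ _,
      (mul_lt_mul_of_pos_right (h1 j0 hj0T) (by positivity))⟩

end Helpers

theorem stmt17 {S C : ℕ} (hC : 0 < C) (hCS : C < S)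
    (B : Matrix (Fin S) (Fin C) ℝ) (hB : B.rank = C)
    (lam : Fin C → ℝ) (hlam_pos : ∀ i, 0 < lam i) (hlam : Antitone lam)
    (hcharB : (B * Bᵀ).charpoly =
      (∏ i, (X - Polynomial.C (lam i))) * X ^ (S - C))
    (σ2 : Fin S → ℝ) (sbar : ℝ) (hsbar : sbar = (∑ j, σ2 j) / S)
    (δ : ℝ) (hδub : ∀ j, |σ2 j - sbar| ≤ δ) (hδex : ∃ j, |σ2 j - sbar| = δ)
    (hgap : 2 * δ < lam ⟨C - 1, by omega⟩)
    (μe : Fin S → ℝ) (hμanti : Antitone μe)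
    (hcharSig : (B * Bᵀ + Matrix.diagonal σ2).charpoly =
      ∏ i, (X - Polynomial.C (μe i))) :
    lam ⟨C - 1, by omega⟩ + sbar - δ ≤ μe ⟨C - 1, by omega⟩ ∧
    sbar + δ < lam ⟨C - 1, by omega⟩ + sbar - δ ∧
    μe ⟨C, hCS⟩ ≤ sbar + δ := by
  classical
  have hS0 : 0 < S := by omega
  have hδ0 : 0 ≤ δ := le_trans (abs_nonneg _) (hδub ⟨0, hS0⟩)
  set lamC := lam ⟨C - 1, by omega⟩ with hlamC
  have hlamC_pos : 0 < lamC := hlam_pos _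
  have hlam_ge : ∀ i, lamC ≤ lam i := by
    intro i
    apply hlam
    exact Fin.mk_le_mk.mpr (by omega)
  -- hermitian structures
  have hAH : (B * Bᵀ).IsHermitian := by
    rw [show Bᵀ = Bᴴ from (Matrix.conjTranspose_eq_transpose_of_trivial B).symm]
    exact Matrix.isHermitian_mul_conjTranspose_self B
  have hQH : (Matrix.diagonal σ2).IsHermitian := Matrix.isHermitian_diagonal σ2
  have hSigH : (B * Bᵀ + Matrix.diagonal σ2).IsHermitian := hAH.add hQH
  set evS := hSigH.eigenvalues with hevS
  set evB := hAH.eigenvalues with hevB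
  -- multiset identities
  have msS : Multiset.map evS Finset.univ.val = Multiset.map μe Finset.univ.val := by
    have h1 := charpoly_hermitian' hSigH
    rw [hcharSig] at h1
    have h2 := congrArg Polynomial.roots h1
    rw [prod_roots', prod_roots'] at h2
    exact h2.symm
  have msB : Multiset.map evB Finset.univ.val
      = Multiset.map lam Finset.univ.val + Multiset.replicate (S - C) 0 := by
    have h1 := charpoly_hermitian' hAH
    rw [hcharB] at h1
    have h2 := congrArg Polynomial.roots h1
    have hne : (∏ i, (X - Polynomial.C (lam i))) * (X:ℝ[X]) ^ (S - C) ≠ 0 :=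
      Polynomial.Monic.ne_zero
        ((Polynomial.monic_prod_of_monic _ _ fun i _ => Polynomial.monic_X_sub_C _).mul
          (Polynomial.monic_X_pow _))
    rw [Polynomial.roots_mul hne, prod_roots', prod_roots'] at h2
    rw [← h2]
    congr 1
    simp [Polynomial.roots_pow, Multiset.nsmul_singleton]
  -- counting transfer
  have cS : ∀ (p : ℝ → Prop) [DecidablePred p],
      (Finset.univ.filter fun j => p (evS j)).card
        = (Finset.univ.filter fun j => p (μe j)).card := by
    intro p _
    rw [count_filter_eq', count_filter_eq', msS]
  have cB : ∀ (p : ℝ → Prop) [DecidablePred p],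
      (Finset.univ.filter fun j => p (evB j)).card
        = (Finset.univ.filter fun i => p (lam i)).card
          + (if p 0 then S - C else 0) := by
    intro p _
    rw [count_filter_eq', msB, Multiset.countP_add, countP_replicate', ← count_filter_eq']
  -- positivity of dot square
  have dot_pos : ∀ x : Fin S → ℝ, x ≠ 0 → 0 < x ⬝ᵥ x := by
    intro x hx
    have h1 : x ⬝ᵥ x = ∑ k, (x k)^2 := by
      simp [dotProduct, sq]
    rw [h1]
    obtain ⟨k, hk⟩ := Function.ne_iff.mp hx
    exact Finset.sum_pos' (fun j _ => sq_nonneg _)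
      ⟨k, Finset.mem_univ _, (sq_nonneg _).lt_of_ne (Ne.symm (pow_ne_zero 2 hk))⟩
  -- diagonal quadratic bounds
  have diagLB : ∀ x : Fin S → ℝ,
      (sbar - δ) * (x ⬝ᵥ x) ≤ x ⬝ᵥ (Matrix.diagonal σ2 *ᵥ x) := by
    intro x
    have h1 : x ⬝ᵥ (Matrix.diagonal σ2 *ᵥ x) = ∑ k, σ2 k * (x k)^2 := by
      simp only [dotProduct, Matrix.mulVec_diagonal, sq]
      apply Finset.sum_congr rfl; intro k _; ring
    have h2 : x ⬝ᵥ x = ∑ k, (x k)^2 := by simp [dotProduct, sq]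
    rw [h1, h2, Finset.mul_sum]
    apply Finset.sum_le_sum
    intro k _
    have := (abs_le.mp (hδub k)).1
    nlinarith [sq_nonneg (x k)]
  have diagUB : ∀ x : Fin S → ℝ,
      x ⬝ᵥ (Matrix.diagonal σ2 *ᵥ x) ≤ (sbar + δ) * (x ⬝ᵥ x) := by
    intro x
    have h1 : x ⬝ᵥ (Matrix.diagonal σ2 *ᵥ x) = ∑ k, σ2 k * (x k)^2 := by
      simp only [dotProduct, Matrix.mulVec_diagonal, sq]
      apply Finset.sum_congr rfl; intro k _; ring
    have h2 : x ⬝ᵥ x = ∑ k, (x k)^2 := by simp [dotProduct, sq]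
    rw [h1, h2, Finset.mul_sum]
    apply Finset.sum_le_sum
    intro k _
    have := (abs_le.mp (hδub k)).2
    nlinarith [sq_nonneg (x k)]
  -- middle inequality
  have mid : sbar + δ < lamC + sbar - δ := by linarith
  refine ⟨?_, mid, ?_⟩
  · -- first inequality : lamC + sbar - δ ≤ μe ⟨C-1⟩
    by_contra hcon
    push_neg at hcon
    set t := lamC + sbar - δ with ht
    -- TS : eigenvalues of Σ below t
    set TS := Finset.univ.filter (fun j => evS j < t) with hTS
    have hTScard : S - C + 1 ≤ TS.card := by
      have h1 : (Finset.univ.filter fun j : Fin S => μe j < t).card ≥ S - (C - 1) := by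
        have : ∀ i : Fin (S - (C-1)), (⟨(i : ℕ) + (C - 1), by omega⟩ : Fin S)
            ∈ Finset.univ.filter fun j : Fin S => μe j < t := by
          intro i
          simp only [Finset.mem_filter, Finset.mem_univ, true_and]
          calc μe ⟨(i : ℕ) + (C - 1), by omega⟩ ≤ μe ⟨C - 1, by omega⟩ :=
                hμanti (Fin.mk_le_mk.mpr (by omega))
            _ < t := hcon
        have hle := Finset.card_le_card_of_injOn
          (s := (Finset.univ : Finset (Fin (S - (C-1)))))
          (t := Finset.univ.filter fun j : Fin S => μe j < t)
          (f := fun i => (⟨(i : ℕ) + (C - 1), by omega⟩ : Fin S))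
          (fun i _ => this i)
          (fun a _ b _ hab => Fin.ext (by
            have h := Fin.mk_eq_mk.mp hab
            omega))
        simpa using hle
      have h3 : TS.card = (Finset.univ.filter fun j : Fin S => μe j < t).card := by
        rw [hTS]; simpa using cS (fun r => r < t)
      omega
    have hTSc : TSᶜ.card ≤ C - 1 := by
      have := Finset.card_compl TS (α := Fin S)
      rw [Fintype.card_fin] at this
      omega
    -- TB : eigenvalues of BBᵀ at least lamC
    set TB := Finset.univ.filter (fun j => lamC ≤ evB j) with hTB
    have hTBcard : TB.card = C := by
      have h1 := cB (fun r => lamC ≤ r)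
      have h2 : (Finset.univ.filter fun i : Fin C => lamC ≤ lam i) = Finset.univ := by
        apply Finset.eq_univ_of_forall
        intro i
        simp [hlam_ge i]
      rw [h2] at h1
      simp only [Finset.card_univ, Fintype.card_fin] at h1
      have h3 : ¬ (lamC ≤ (0:ℝ)) := not_le.mpr hlamC_pos
      rw [if_neg h3] at h1
      simpa using h1
    have hTBc : TBᶜ.card = S - C := by
      have := Finset.card_compl TB (α := Fin S)
      rw [Fintype.card_fin, hTBcard] at this
      omega
    -- kernel element
    set φ := LinearMap.prod
      (dotMap fun j : ↥(TBᶜ) => ⇑(hAH.eigenvectorBasis j.1))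
      (dotMap fun j : ↥(TSᶜ) => ⇑(hSigH.eigenvectorBasis j.1)) with hφdef
    have hdim : Module.finrank ℝ ((↥(TBᶜ) → ℝ) × (↥(TSᶜ) → ℝ)) < S := by
      rw [Module.finrank_prod, Module.finrank_fintype_fun_eq_card,
        Module.finrank_fintype_fun_eq_card, Fintype.card_coe, Fintype.card_coe]
      omega
    obtain ⟨x, hx0, hφx⟩ := exists_ker φ hdim
    have hB0 : ∀ j, j ∉ TB → ⇑(hAH.eigenvectorBasis j) ⬝ᵥ x = 0 := by
      intro j hj
      have := congrFun (congrArg Prod.fst hφx) ⟨j, Finset.mem_compl.mpr hj⟩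
      simpa [φ, dotMap] using this
    have hS0' : ∀ j, j ∉ TS → ⇑(hSigH.eigenvectorBasis j) ⬝ᵥ x = 0 := by
      intro j hj
      have := congrFun (congrArg Prod.snd hφx) ⟨j, Finset.mem_compl.mpr hj⟩
      simpa [φ, dotMap] using this
    have hxx : 0 < x ⬝ᵥ x := dot_pos x hx0
    -- lower bound via BBᵀ and diagonal
    have hlb : t * (x ⬝ᵥ x) ≤ x ⬝ᵥ ((B * Bᵀ + Matrix.diagonal σ2) *ᵥ x) := by
      have hA : lamC * (x ⬝ᵥ x) ≤ x ⬝ᵥ ((B * Bᵀ) *ᵥ x) := by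
        rw [dot_mulVec_eq hAH, dot_self_eq hAH x]
        apply sum_sq_le evB _ TB lamC
        · intro j hj
          exact (Finset.mem_filter.mp hj).2
        · exact hB0
      have hQ := diagLB x
      rw [Matrix.add_mulVec, dotProduct_add]
      rw [ht]
      nlinarith
    -- strict upper bound via eigen-expansion of Σ
    have hub : x ⬝ᵥ ((B * Bᵀ + Matrix.diagonal σ2) *ᵥ x) < t * (x ⬝ᵥ x) := by
      rw [dot_mulVec_eq hSigH, dot_self_eq hSigH x]
      apply sum_sq_lt evS _ TS t
      · intro j hj
        exact (Finset.mem_filter.mp hj).2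
      · exact hS0'
      · rw [← dot_self_eq hSigH x]; exact hxx
    linarith
  · -- third inequality : μe ⟨C⟩ ≤ sbar + δ
    by_contra hcon
    push_neg at hcon
    set TS1 := Finset.univ.filter (fun j => sbar + δ < evS j) with hTS1
    have hTS1card : C + 1 ≤ TS1.card := by
      have h1 : (Finset.univ.filter fun j : Fin S => sbar + δ < μe j).card ≥ C + 1 := by
        have hmem : ∀ i : Fin (C + 1), (⟨(i : ℕ), by omega⟩ : Fin S)
            ∈ Finset.univ.filter fun j : Fin S => sbar + δ < μe j := by
          intro i
          simp only [Finset.mem_filter, Finset.mem_univ, true_and]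
          calc sbar + δ < μe ⟨C, hCS⟩ := hcon
            _ ≤ μe ⟨(i : ℕ), by omega⟩ := hμanti (Fin.mk_le_mk.mpr (by omega))
        have hle := Finset.card_le_card_of_injOn
          (s := (Finset.univ : Finset (Fin (C + 1))))
          (t := Finset.univ.filter fun j : Fin S => sbar + δ < μe j)
          (f := fun i => (⟨(i : ℕ), by omega⟩ : Fin S))
          (fun i _ => hmem i)
          (fun a _ b _ hab => Fin.ext (by
            have h := Fin.mk_eq_mk.mp hab
            omega))
        simpa using hle
      have h3 : TS1.card = (Finset.univ.filter fun j : Fin S => sbar + δ < μe j).card := by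
        rw [hTS1]; simpa using cS (fun r => sbar + δ < r)
      omega
    have hTS1c : TS1ᶜ.card ≤ S - C - 1 := by
      have := Finset.card_compl TS1 (α := Fin S)
      rw [Fintype.card_fin] at this
      omega
    set φ := LinearMap.prod (Matrix.mulVecLin Bᵀ)
      (dotMap fun j : ↥(TS1ᶜ) => ⇑(hSigH.eigenvectorBasis j.1)) with hφdef
    have hdim : Module.finrank ℝ ((Fin C → ℝ) × (↥(TS1ᶜ) → ℝ)) < S := by
      rw [Module.finrank_prod, Module.finrank_fintype_fun_eq_card,
        Module.finrank_fintype_fun_eq_card, Fintype.card_coe, Fintype.card_fin]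
      omega
    obtain ⟨x, hx0, hφx⟩ := exists_ker φ hdim
    have hBx : Bᵀ *ᵥ x = 0 := by
      have h := congrArg Prod.fst hφx
      rw [Matrix.mulVec_transpose]
      simpa [φ] using h
    have hS0' : ∀ j, j ∉ TS1 → ⇑(hSigH.eigenvectorBasis j) ⬝ᵥ x = 0 := by
      intro j hj
      have := congrFun (congrArg Prod.snd hφx) ⟨j, Finset.mem_compl.mpr hj⟩
      simpa [φ, dotMap] using this
    have hxx : 0 < x ⬝ᵥ x := dot_pos x hx0
    have hub : x ⬝ᵥ ((B * Bᵀ + Matrix.diagonal σ2) *ᵥ x) ≤ (sbar + δ) * (x ⬝ᵥ x) := by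
      have hA : x ⬝ᵥ ((B * Bᵀ) *ᵥ x) = 0 := by
        rw [← Matrix.mulVec_mulVec, hBx, Matrix.mulVec_zero, dotProduct_zero]
      have hQ := diagUB x
      rw [Matrix.add_mulVec, dotProduct_add, hA, zero_add]
      exact hQ
    have hlb : (sbar + δ) * (x ⬝ᵥ x) < x ⬝ᵥ ((B * Bᵀ + Matrix.diagonal σ2) *ᵥ x) := by
      rw [dot_mulVec_eq hSigH, dot_self_eq hSigH x]
      apply sum_sq_gt evS _ TS1 (sbar + δ)
      · intro j hj
        exact (Finset.mem_filter.mp hj).2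
      · exact hS0'
      · rw [← dot_self_eq hSigH x]; exact hxx
    linarith
end
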